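/- Let C be a linear [n,k,d]_q code, ℓ ≥ 1 an integer, λ_1, …, λ_ℓ nonzero elements of 𝔽_q, and C^{×ℓ} = {(x_1|⋯|x_ℓ) ∈ 𝔽_q^{nℓ} : x_i ∈ 𝔽_q^n, λ_1x_1 + ⋯ + λ_ℓx_ℓ ∈ C}. Then C is completely regular with covering radius ρ = 1 if and only if C^{×ℓ} is completely regular with covering radius ρ' = 1. -/

import Mathlib

open Finset

variable {F : Type*} [Field F] [Fintype F] [DecidableEq F]

/-- The Hamming distance from a vector to a code. -/
noncomputable def distToCode {ι : Type*} [Fintype ι] (C : Set (ι → F)) (x : ι → F) : ℕ :=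
  sInf {d : ℕ | ∃ c ∈ C, hammingDist x c = d}

/-- The covering radius of a code: the maximal distance of a vector to the code. -/
noncomputable def coveringRadius {ι : Type*} [Fintype ι] (C : Set (ι → F)) : ℕ :=
  sSup {d : ℕ | ∃ x : ι → F, distToCode C x = d}

/-- `C` has intersection numbers `b l` (number of neighbours one step further from the code)
and `c l` (number of neighbours one step closer to the code), for every `x` at distance `l`. -/
def HasIntersectionNumbers {ι : Type*} [Fintype ι] (C : Set (ι → F)) (b c : ℕ → ℕ) : Prop :=
  ∀ l : ℕ, ∀ x : ι → F, distToCode C x = l →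
    Nat.card {y : ι → F | hammingDist x y = 1 ∧ distToCode C y = l + 1} = b l ∧
    Nat.card {y : ι → F | hammingDist x y = 1 ∧ distToCode C y + 1 = l} = c l

/-- A code is completely regular if it admits intersection numbers. -/
def IsCompletelyRegular {ι : Type*} [Fintype ι] (C : Set (ι → F)) : Prop :=
  ∃ b c : ℕ → ℕ, HasIntersectionNumbers C b c

/-- The minimum distance of a code. -/
noncomputable def minDist {ι : Type*} [Fintype ι] (C : Set (ι → F)) : ℕ :=
  sInf {d : ℕ | ∃ x ∈ C, ∃ y ∈ C, x ≠ y ∧ hammingDist x y = d}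

/-- A code is equidistant if any two distinct codewords are at the same Hamming distance. -/
def IsEquidistant {ι : Type*} [Fintype ι] (C : Set (ι → F)) : Prop :=
  ∃ d : ℕ, ∀ x ∈ C, ∀ y ∈ C, x ≠ y → hammingDist x y = d

/-- The dual of a code, with respect to the standard bilinear form. -/
def dualSet {ι : Type*} [Fintype ι] (C : Set (ι → F)) : Set (ι → F) :=
  {y | ∀ x ∈ C, ∑ i, x i * y i = 0}

/-- A code of length `n` is antipodal if it contains a word of Hamming weight `n`. -/
def IsAntipodal {ι : Type*} [Fintype ι] (C : Set (ι → F)) : Prop :=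
  ∃ v ∈ C, hammingNorm v = Fintype.card ι

/-- A monomial transformation: a coordinate permutation composed with multiplication of
each coordinate by a nonzero scalar. -/
def IsMonomialMap {ι : Type*} (φ : (ι → F) → (ι → F)) : Prop :=
  ∃ (π : Equiv.Perm ι) (s : ι → Fˣ), ∀ x i, φ x i = (s i : F) * x (π i)

/-- Two codes are monomially equivalent if one is the image of the other under a bijection of
coordinates together with multiplication of each coordinate by a nonzero scalar. -/
def MonomiallyEquivalent {ι κ : Type*} (C : Set (ι → F)) (D : Set (κ → F)) : Prop :=
  ∃ (e : ι ≃ κ) (s : ι → Fˣ),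
    (fun (x : ι → F) (j : κ) => (s (e.symm j) : F) * x (e.symm j)) '' C = D

/-- The orbit, under the action of `Aut C` on the cosets of `C`, of the coset of `v`
(realised as the union of all cosets in the orbit). -/
def cosetOrbit {ι : Type*} (C : Submodule F (ι → F)) (v : ι → F) : Set (ι → F) :=
  {w | ∃ φ : (ι → F) → (ι → F), IsMonomialMap φ ∧
    φ '' (C : Set (ι → F)) = (C : Set (ι → F)) ∧ φ v - w ∈ C}

/-- The number of orbits of the action of `Aut C` on the cosets of `C`. -/
noncomputable def numCosetOrbits {ι : Type*} (C : Submodule F (ι → F)) : ℕ :=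
  Nat.card (Set.range (cosetOrbit C))

/-- `H` is a `q`-ary Hamming code with parameter `m ≥ 2`: a perfect
`[(q^m-1)/(q-1), (q^m-1)/(q-1) - m, 3]_q` code with covering radius 1. -/
def IsHammingCode (m : ℕ) {nm : ℕ} (H : Submodule F (Fin nm → F)) : Prop :=
  2 ≤ m ∧ nm = (Fintype.card F ^ m - 1) / (Fintype.card F - 1) ∧
  Module.finrank F H = nm - m ∧ minDist (H : Set (Fin nm → F)) = 3 ∧
  coveringRadius (H : Set (Fin nm → F)) = 1

/-- The extended code: append an overall parity-check coordinate. -/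
def extendedCode {m : ℕ} (D : Set (Fin m → F)) : Set (Fin (m + 1) → F) :=
  {z | (fun i : Fin m => z i.castSucc) ∈ D ∧ ∑ i, z i = 0}

/-- Construction I(u): append `u` free coordinates to every codeword. -/
def appendCode (u : ℕ) {n : ℕ} (C : Set (Fin n → F)) : Set (Fin (n + u) → F) :=
  {z | ∃ c ∈ C, ∃ y : Fin u → F, z = Fin.append c y}

/-- Construction II(ℓ): codewords are `ℓ`-tuples of blocks whose `λ`-weighted sum lies in `C`. -/
def repeatCode {n ℓ : ℕ} (lam : Fin ℓ → Fˣ) (C : Set (Fin n → F)) :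
    Set (Fin ℓ × Fin n → F) :=
  {z | (fun j : Fin n => ∑ i : Fin ℓ, (lam i : F) * z (i, j)) ∈ C}

/-- The code `{(x₁|⋯|x_ℓ|y) : x₁+⋯+x_ℓ ∈ H, y free}` built from a code `H`. -/
def hammingRepeatCode {nm : ℕ} (ℓ u : ℕ) (H : Set (Fin nm → F)) :
    Set ((Fin ℓ × Fin nm) ⊕ Fin u → F) :=
  {z | (fun j : Fin nm => ∑ i : Fin ℓ, z (Sum.inl (i, j))) ∈ H}


set_option linter.unusedSectionVars false

variable {n ℓ : ℕ}

def sMapAux (lam : Fin ℓ → Fˣ) (z : Fin ℓ × Fin n → F) : Fin n → F :=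
  fun j => ∑ i : Fin ℓ, (lam i : F) * z (i, j)

lemma sMapAux_update (lam : Fin ℓ → Fˣ) (z : Fin ℓ × Fin n → F) (i : Fin ℓ) (j : Fin n) (v : F) :
    sMapAux lam (Function.update z (i, j) v)
      = Function.update (sMapAux lam z) j (sMapAux lam z j + (lam i : F) * (v - z (i, j))) := by
  funext j'
  by_cases hj : j' = j
  · subst hj
    rw [Function.update_self]
    have hf : (fun i' => (lam i' : F) * Function.update z (i, j') v (i', j'))
        = Function.update (fun i' => (lam i' : F) * z (i', j')) i ((lam i : F) * v) := by
      funext i'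
      by_cases hi : i' = i
      · subst hi; rw [Function.update_self, Function.update_self]
      · rw [Function.update_of_ne hi, Function.update_of_ne (by simp [hi])]
    show ∑ i' : Fin ℓ, (lam i' : F) * Function.update z (i, j') v (i', j') = _
    rw [show (∑ i' : Fin ℓ, (lam i' : F) * Function.update z (i, j') v (i', j'))
        = ∑ i' : Fin ℓ, Function.update (fun i' => (lam i' : F) * z (i', j')) i ((lam i : F) * v) i'
        from Finset.sum_congr rfl fun i' _ => congrFun hf i']
    rw [Finset.sum_update_of_mem (Finset.mem_univ i)]
    unfold sMapAux
    rw [Finset.sum_eq_sum_sdiff_singleton_add (Finset.mem_univ i)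
      (fun i' => (lam i' : F) * z (i', j'))]
    ring
  · rw [Function.update_of_ne hj]
    show ∑ i' : Fin ℓ, (lam i' : F) * Function.update z (i, j) v (i', j') = _
    refine Finset.sum_congr rfl fun i' _ => ?_
    rw [Function.update_of_ne (by simp [hj])]

lemma hammingDist_sMapAux_le (lam : Fin ℓ → Fˣ) (z y : Fin ℓ × Fin n → F) :
    hammingDist (sMapAux lam z) (sMapAux lam y) ≤ hammingDist z y := by
  classical
  unfold hammingDist
  apply Finset.card_le_card_of_surjOn Prod.snd
  intro j hj
  simp only [Finset.coe_filter, Finset.mem_univ, true_and, Set.mem_setOf_eq] at hj ⊢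
  by_contra h
  simp only [Set.mem_image, Set.mem_setOf_eq, not_exists, not_and] at h
  apply hj
  unfold sMapAux
  refine Finset.sum_congr rfl fun i _ => ?_
  by_cases hzi : z (i, j) = y (i, j)
  · rw [hzi]
  · exact absurd rfl (h (i, j) hzi)

def secAux (hℓ : 1 ≤ ℓ) (lam : Fin ℓ → Fˣ) (x : Fin n → F) : Fin ℓ × Fin n → F :=
  fun p => if p.1 = ⟨0, hℓ⟩ then ((lam ⟨0, hℓ⟩ : F))⁻¹ * x p.2 else 0

lemma sMapAux_secAux (hℓ : 1 ≤ ℓ) (lam : Fin ℓ → Fˣ) (x : Fin n → F) :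
    sMapAux lam (secAux hℓ lam x) = x := by
  funext j
  unfold sMapAux secAux
  simp only [mul_ite, mul_zero]
  rw [Finset.sum_ite_eq' Finset.univ ⟨0, hℓ⟩ (fun i => (lam i : F) * (((lam ⟨0, hℓ⟩ : F))⁻¹ * x j))]
  · simp [mul_inv_cancel_left₀ (Units.ne_zero (lam ⟨0, hℓ⟩)), mul_assoc]

lemma sMapAux_add (lam : Fin ℓ → Fˣ) (z w : Fin ℓ × Fin n → F) :
    sMapAux lam (fun p => z p + w p) = fun j => sMapAux lam z j + sMapAux lam w j := by
  funext j; unfold sMapAux; rw [← Finset.sum_add_distrib]; exact Finset.sum_congr rfl fun i _ => by ring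

lemma mem_repeatCodeAux {lam : Fin ℓ → Fˣ} {C : Set (Fin n → F)} {z : Fin ℓ × Fin n → F} :
    z ∈ repeatCode lam C ↔ sMapAux lam z ∈ C := Iff.rfl

/-- Given `c ∈ C` near `sMapAux lam z`, a codeword of the repeated code near `z`. -/
lemma exists_near (hℓ : 1 ≤ ℓ) (lam : Fin ℓ → Fˣ) (C : Set (Fin n → F))
    (z : Fin ℓ × Fin n → F) {c : Fin n → F} (hc : c ∈ C) :
    ∃ y ∈ repeatCode lam C, hammingDist z y ≤ hammingDist (sMapAux lam z) c := by
  classical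
  set w := secAux hℓ lam (fun j => c j - sMapAux lam z j) with hw
  refine ⟨fun p => z p + w p, ?_, ?_⟩
  · rw [mem_repeatCodeAux, sMapAux_add, hw, sMapAux_secAux]
    convert hc using 1
    funext j; ring
  · unfold hammingDist
    apply Finset.card_le_card_of_injOn Prod.snd
    · rintro ⟨i, j⟩ hij
      simp only [Finset.mem_filter, Finset.coe_filter, Finset.mem_univ, true_and, Set.mem_setOf_eq] at hij ⊢
      intro hcj
      apply hij
      have : w (i, j) = 0 := by
        unfold w
        unfold secAux
        by_cases hi : i = (⟨0, hℓ⟩ : Fin ℓ)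
        · simp [hi, sub_eq_zero.mpr hcj.symm]
        · simp [hi]
      simp [this]
    · rintro ⟨i, j⟩ hij ⟨i', j'⟩ hij' hjj
      simp only [Finset.coe_filter, Finset.mem_univ, true_and, Set.mem_setOf_eq] at hij hij'
      have hfst : ∀ (i₀ : Fin ℓ) (j₀ : Fin n),
          z (i₀, j₀) ≠ z (i₀, j₀) + w (i₀, j₀) → i₀ = ⟨0, hℓ⟩ := by
        intro i₀ j₀ h
        by_contra hi0
        apply h
        unfold w
        unfold secAux
        simp [hi0]
      have h1 := hfst i j hij
      have h2 := hfst i' j' hij'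
      simp only at hjj
      rw [Prod.mk.injEq]
      exact ⟨h1.trans h2.symm, hjj⟩

lemma distToCode_repeat (hℓ : 1 ≤ ℓ) (lam : Fin ℓ → Fˣ) (C : Set (Fin n → F))
    (hC0 : (0 : Fin n → F) ∈ C) (z : Fin ℓ × Fin n → F) :
    distToCode (repeatCode lam C) z = distToCode C (sMapAux lam z) := by
  have hCne : {d : ℕ | ∃ c ∈ C, hammingDist (sMapAux lam z) c = d}.Nonempty :=
    ⟨_, 0, hC0, rfl⟩
  obtain ⟨c, hc, hcd⟩ := Nat.sInf_mem hCne
  obtain ⟨y, hyD, hyd⟩ := exists_near hℓ lam C z hc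
  apply le_antisymm
  · calc distToCode (repeatCode lam C) z ≤ hammingDist z y := Nat.sInf_le ⟨y, hyD, rfl⟩
      _ ≤ hammingDist (sMapAux lam z) c := hyd
      _ = distToCode C (sMapAux lam z) := by rw [hcd]; rfl
  · have hDne : {d : ℕ | ∃ y' ∈ repeatCode lam C, hammingDist z y' = d}.Nonempty :=
      ⟨_, y, hyD, rfl⟩
    apply le_csInf hDne
    rintro d ⟨y', hy', rfl⟩
    calc distToCode C (sMapAux lam z) ≤ hammingDist (sMapAux lam z) (sMapAux lam y') :=
          Nat.sInf_le ⟨sMapAux lam y', hy', rfl⟩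
      _ ≤ hammingDist z y' := hammingDist_sMapAux_le lam z y'

/-- Neighbours of `x` satisfying `R` are parametrised by (coordinate, new value) pairs. -/
lemma card_neighbors {ι : Type*} [Fintype ι] [DecidableEq ι] (x : ι → F) (R : (ι → F) → Prop) :
    Nat.card {y : ι → F | hammingDist x y = 1 ∧ R y}
      = Nat.card {p : ι × F | p.2 ≠ x p.1 ∧ R (Function.update x p.1 p.2)} := by
  classical
  refine (Nat.card_congr (Equiv.ofBijective
    (fun p : {p : ι × F // p.2 ≠ x p.1 ∧ R (Function.update x p.1 p.2)} =>
      (⟨Function.update x p.1.1 p.1.2, ?_, p.2.2⟩ :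
        {y : ι → F // hammingDist x y = 1 ∧ R y})) ⟨?_, ?_⟩)).symm
  · -- hammingDist x (update x k v) = 1
    obtain ⟨⟨k, v⟩, hv, _⟩ := p
    unfold hammingDist
    rw [Finset.card_eq_one]
    refine ⟨k, ?_⟩
    ext i
    simp only [Finset.mem_filter, Finset.mem_univ, true_and, Finset.mem_singleton]
    constructor
    · intro h
      by_contra hik
      exact h (Function.update_of_ne hik v x).symm
    · rintro rfl
      rw [Function.update_self]
      exact fun h => hv h.symm
  · -- injective
    rintro ⟨⟨k, v⟩, hv, hR⟩ ⟨⟨k', v'⟩, hv', hR'⟩ h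
    simp only [Subtype.mk.injEq] at h ⊢
    rw [Prod.mk.injEq]
    by_cases hkk : k = k'
    · subst hkk
      refine ⟨rfl, ?_⟩
      have := congrFun h k
      rwa [Function.update_self, Function.update_self] at this
    · exfalso
      have := congrFun h k
      rw [Function.update_self, Function.update_of_ne hkk] at this
      exact hv this
  · -- surjective
    rintro ⟨y, hy1, hyR⟩
    unfold hammingDist at hy1
    rw [Finset.card_eq_one] at hy1
    obtain ⟨k, hk⟩ := hy1
    have hkmem : x k ≠ y k := by
      have : k ∈ ({k} : Finset ι) := Finset.mem_singleton_self k
      rw [← hk, Finset.mem_filter] at this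
      exact this.2
    have hyx : y = Function.update x k (y k) := by
      funext i
      by_cases hik : i = k
      · subst hik; rw [Function.update_self]
      · rw [Function.update_of_ne hik]
        by_contra hne
        have : i ∈ Finset.univ.filter (fun i => x i ≠ y i) := by
          simp [Ne.symm hne]
        rw [hk, Finset.mem_singleton] at this
        exact hik this
    refine ⟨⟨(k, y k), fun h => hkmem h.symm, ?_⟩, ?_⟩
    · rw [← hyx]; exact hyR
    · simp only [Subtype.mk.injEq]
      exact hyx.symm

lemma card_pairs (lam : Fin ℓ → Fˣ) (z : Fin ℓ × Fin n → F) (Q : (Fin n → F) → Prop) :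
    Nat.card {p : (Fin ℓ × Fin n) × F |
        p.2 ≠ z p.1 ∧ Q (sMapAux lam (Function.update z p.1 p.2))}
      = ℓ * Nat.card {p : Fin n × F |
          p.2 ≠ sMapAux lam z p.1 ∧ Q (Function.update (sMapAux lam z) p.1 p.2)} := by
  classical
  have e : {p : (Fin ℓ × Fin n) × F |
        p.2 ≠ z p.1 ∧ Q (sMapAux lam (Function.update z p.1 p.2))}
      ≃ Fin ℓ × {p : Fin n × F |
          p.2 ≠ sMapAux lam z p.1 ∧ Q (Function.update (sMapAux lam z) p.1 p.2)} := by
    refine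
      { toFun := fun p => ⟨p.1.1.1,
          ⟨(p.1.1.2, sMapAux lam z p.1.1.2 + (lam p.1.1.1 : F) * (p.1.2 - z p.1.1)), ?_, ?_⟩⟩
        invFun := fun q => ⟨((q.1, q.2.1.1),
          z (q.1, q.2.1.1) + ((lam q.1 : F))⁻¹ * (q.2.1.2 - sMapAux lam z q.2.1.1)), ?_, ?_⟩
        left_inv := ?_
        right_inv := ?_ }
    · -- new value differs
      obtain ⟨⟨⟨i, j⟩, v⟩, hv, hQ⟩ := p
      simp only [Set.mem_setOf_eq] at hv hQ ⊢
      intro h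
      have : (lam i : F) * (v - z (i, j)) = 0 := by linear_combination h
      rcases mul_eq_zero.mp this with h1 | h2
      · exact Units.ne_zero (lam i) h1
      · exact hv (by linear_combination h2)
    · obtain ⟨⟨⟨i, j⟩, v⟩, hv, hQ⟩ := p
      simp only [Set.mem_setOf_eq] at hv hQ ⊢
      rw [← sMapAux_update]
      exact hQ
    · -- inv: value differs
      obtain ⟨i, ⟨⟨j, w⟩, hw, hQ⟩⟩ := q
      simp only [Set.mem_setOf_eq] at hw hQ ⊢
      intro h
      have h2 : ((lam i : F))⁻¹ * (w - sMapAux lam z j) = 0 := by linear_combination h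
      rcases mul_eq_zero.mp h2 with h3 | h4
      · exact inv_ne_zero (Units.ne_zero (lam i)) h3
      · exact hw (by linear_combination h4)
    · obtain ⟨i, ⟨⟨j, w⟩, hw, hQ⟩⟩ := q
      simp only [Set.mem_setOf_eq] at hw hQ ⊢
      rw [sMapAux_update]
      have : sMapAux lam z j + (lam i : F) *
          (z (i, j) + ((lam i : F))⁻¹ * (w - sMapAux lam z j) - z (i, j)) = w := by
        field_simp
        ring
      rw [this]
      exact hQ
    · rintro ⟨⟨⟨i, j⟩, v⟩, hv, hQ⟩
      apply Subtype.ext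
      show ((i, j), _) = ((i, j), v)
      congr 1
      field_simp
      ring
    · rintro ⟨i, ⟨⟨j, w⟩, hw, hQ⟩⟩
      show (i, _) = (i, _)
      congr 1
      apply Subtype.ext
      show (j, _) = (j, w)
      congr 1
      field_simp
      ring
  rw [Nat.card_congr e, Nat.card_prod, Nat.card_eq_fintype_card, Fintype.card_fin]

/-- Master counting lemma. -/
lemma card_nbr_repeat (lam : Fin ℓ → Fˣ) (z : Fin ℓ × Fin n → F) (Q : (Fin n → F) → Prop) :
    Nat.card {y : Fin ℓ × Fin n → F | hammingDist z y = 1 ∧ Q (sMapAux lam y)}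
      = ℓ * Nat.card {w : Fin n → F | hammingDist (sMapAux lam z) w = 1 ∧ Q w} := by
  rw [card_neighbors z (fun y => Q (sMapAux lam y)),
    card_neighbors (sMapAux lam z) Q, card_pairs]

lemma coveringRadius_repeat' (hℓ : 1 ≤ ℓ) (lam : Fin ℓ → Fˣ) (C : Set (Fin n → F))
    (hC0 : (0 : Fin n → F) ∈ C) :
    coveringRadius (repeatCode lam C) = coveringRadius C := by
  unfold coveringRadius
  congr 1
  ext d
  simp only [Set.mem_setOf_eq]
  constructor
  · rintro ⟨z, rfl⟩
    exact ⟨sMapAux lam z, (distToCode_repeat hℓ lam C hC0 z).symm⟩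
  · rintro ⟨x, rfl⟩
    exact ⟨secAux hℓ lam x, by rw [distToCode_repeat hℓ lam C hC0, sMapAux_secAux]⟩


/-- `C` is completely regular with covering radius 1 iff `C^{×ℓ}` is completely
regular with covering radius 1. -/
theorem construction_II_completely_regular
    {F : Type*} [Field F] [Fintype F] [DecidableEq F] {n ℓ : ℕ} (hℓ : 1 ≤ ℓ)
    (lam : Fin ℓ → Fˣ) (C : Submodule F (Fin n → F)) :
    (IsCompletelyRegular (C : Set (Fin n → F)) ∧
        coveringRadius (C : Set (Fin n → F)) = 1) ↔
      (IsCompletelyRegular (repeatCode lam (C : Set (Fin n → F))) ∧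
        coveringRadius (repeatCode lam (C : Set (Fin n → F))) = 1) := by
  classical
  set S : Set (Fin n → F) := (C : Set (Fin n → F)) with hS
  have hC0 : (0 : Fin n → F) ∈ S := C.zero_mem
  have hdist := distToCode_repeat hℓ lam S hC0
  have hcov := coveringRadius_repeat' hℓ lam S hC0
  have hset : ∀ (z : Fin ℓ × Fin n → F) (P : ℕ → Prop),
      {y : Fin ℓ × Fin n → F | hammingDist z y = 1 ∧ P (distToCode (repeatCode lam S) y)}
        = {y : Fin ℓ × Fin n → F | hammingDist z y = 1 ∧ P (distToCode S (sMapAux lam y))} := by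
    intro z P
    ext y
    simp only [Set.mem_setOf_eq, hdist]
  constructor
  · rintro ⟨⟨b, c, h⟩, hρ⟩
    refine ⟨⟨fun l => ℓ * b l, fun l => ℓ * c l, ?_⟩, by rw [hcov, hρ]⟩
    intro l z hz
    rw [hdist z] at hz
    obtain ⟨hb, hc⟩ := h l (sMapAux lam z) hz
    constructor
    · rw [hset z (fun t => t = l + 1),
        card_nbr_repeat lam z (fun w => distToCode S w = l + 1), hb]
    · rw [hset z (fun t => t + 1 = l),
        card_nbr_repeat lam z (fun w => distToCode S w + 1 = l), hc]
  · rintro ⟨⟨b, c, h⟩, hρ⟩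
    refine ⟨⟨fun l => b l / ℓ, fun l => c l / ℓ, ?_⟩, by rw [← hcov, hρ]⟩
    intro l x hx
    have hz : distToCode (repeatCode lam S) (secAux hℓ lam x) = l := by
      rw [hdist, sMapAux_secAux]
      exact hx
    obtain ⟨hb, hc⟩ := h l (secAux hℓ lam x) hz
    have key : ∀ Q : (Fin n → F) → Prop,
        Nat.card {y : Fin ℓ × Fin n → F |
            hammingDist (secAux hℓ lam x) y = 1 ∧ Q (sMapAux lam y)}
          = ℓ * Nat.card {w : Fin n → F | hammingDist x w = 1 ∧ Q w} := by
      intro Q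
      rw [card_nbr_repeat, sMapAux_secAux]
    rw [hset _ (fun t => t = l + 1), key (fun w => distToCode S w = l + 1)] at hb
    rw [hset _ (fun t => t + 1 = l), key (fun w => distToCode S w + 1 = l)] at hc
    constructor
    · exact (Nat.div_eq_of_eq_mul_right (by omega) hb.symm).symm
    · exact (Nat.div_eq_of_eq_mul_right (by omega) hc.symm).symm
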